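/- Let V : X → ℝⁿ* satisfy the second-order sufficiency condition ⟨V(x) - V(x*), x - x*⟩ ≥ μ‖x - x*‖² for all x in a convex neighborhood B of a solution x* of the variational inequality (so ⟨V(x*), x - x*⟩ ≥ 0 for all x ∈ X). Then for all x ∈ X, y ∈ B, and c ∈ [0,1]: ⟨V(y) - c·V(x*), y - x*⟩ ≥ (μ/2)‖x - x*‖² - μ‖y - x‖². -/

import Mathlib

/-- lower bound from second-order sufficiency near a VI solution. -/
theorem stmt_11 {n : ℕ} (X : Set (EuclideanSpace ℝ (Fin n)))
    (hXc : IsClosed X) (hXconv : Convex ℝ X)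
    (V : EuclideanSpace ℝ (Fin n) → EuclideanSpace ℝ (Fin n))
    (xs : EuclideanSpace ℝ (Fin n)) (hxs : xs ∈ X)
    (B : Set (EuclideanSpace ℝ (Fin n))) (hBX : B ⊆ X) (hBconv : Convex ℝ B)
    (hBnhd : B ∈ nhdsWithin xs X) (μ : ℝ) (hμ : 0 < μ)
    (hVI : ∀ x ∈ X, 0 ≤ (inner ℝ (V xs) (x - xs) : ℝ))
    (hSOS : ∀ x ∈ B, μ * ‖x - xs‖ ^ 2 ≤ (inner ℝ (V x - V xs) (x - xs) : ℝ)) :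
    ∀ x ∈ X, ∀ y ∈ B, ∀ c ∈ Set.Icc (0:ℝ) 1,
      μ / 2 * ‖x - xs‖ ^ 2 - μ * ‖y - x‖ ^ 2 ≤ (inner ℝ (V y - c • V xs) (y - xs) : ℝ) := by
  intro x hx y hy c hc
  have h1 : μ * ‖y - xs‖ ^ 2 ≤ (inner ℝ (V y - V xs) (y - xs) : ℝ) := hSOS y hy
  have h2 : 0 ≤ (inner ℝ (V xs) (y - xs) : ℝ) := hVI y (hBX hy)
  have hsplit : (inner ℝ (V y - c • V xs) (y - xs) : ℝ)
      = (inner ℝ (V y - V xs) (y - xs) : ℝ) + (1 - c) * (inner ℝ (V xs) (y - xs) : ℝ) := by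
    simp [inner_sub_left, inner_smul_left]; ring
  have hc1 : 0 ≤ 1 - c := by linarith [hc.2]
  have hnorm : ‖x - xs‖ ^ 2 ≤ 2 * ‖y - xs‖ ^ 2 + 2 * ‖y - x‖ ^ 2 := by
    have hxx : x - xs = (y - xs) + (x - y) := by abel
    have h : ‖x - xs‖ ≤ ‖y - xs‖ + ‖y - x‖ := by
      rw [hxx, ← norm_sub_rev x y]; exact norm_add_le _ _
    nlinarith [norm_nonneg (x - xs), norm_nonneg (y - xs), norm_nonneg (y - x),
      sq_nonneg (‖y - xs‖ - ‖y - x‖)]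
  rw [hsplit]
  nlinarith [mul_nonneg hc1 h2]
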